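/- For the map f(z) = (z, z^m − 1) with m a nonzero integer, the area of the amoeba A_f = {(log|z|, log|z^m−1|) : z ∈ ℂ*, z^m ≠ 1} equals π²/(2|m|). -/

import Mathlib

open Complex MeasureTheory Set

lemma oddBasel : HasSum (fun k : ℕ => (1:ℝ) / (2*(k:ℝ)+1)^2) (Real.pi^2/8) := by
  have h := hasSum_zeta_two
  have heven : HasSum (fun k : ℕ => (1:ℝ) / ((2*k : ℕ):ℝ)^2) (4⁻¹ * (Real.pi^2/6)) := by
    have h4 := h.mul_left 4⁻¹
    have he : (fun k : ℕ => (1:ℝ) / ((2*k : ℕ):ℝ)^2) = fun k : ℕ => 4⁻¹ * ((1:ℝ)/(k:ℝ)^2) := by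
      funext k
      push_cast
      rw [one_div, one_div, ← mul_inv, mul_pow]
      norm_num
    rw [he]
    exact h4
  have hinj : Function.Injective (fun k : ℕ => 2*k+1) := by
    intro a b hab; dsimp at hab; omega
  have hso : Summable (fun k : ℕ => (1:ℝ) / ((2*k+1 : ℕ):ℝ)^2) :=
    h.summable.comp_injective hinj
  have hodd := hso.hasSum
  have htotal := HasSum.even_add_odd (f := fun n : ℕ => (1:ℝ)/(n:ℝ)^2) heven hodd
  have hval : 4⁻¹ * (Real.pi^2/6) + (∑' k : ℕ, (1:ℝ) / ((2*k+1 : ℕ):ℝ)^2) = Real.pi^2/6 :=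
    htotal.unique h
  have hS : (∑' k : ℕ, (1:ℝ) / ((2*k+1 : ℕ):ℝ)^2) = Real.pi^2/8 := by linarith
  rw [hS] at hodd
  convert hodd using 2 with k
  push_cast
  ring

lemma logSeries {x : ℝ} (h1 : |x| < 1) :
    HasSum (fun k : ℕ => 2 * x^(2*k+1) / (2*(k:ℝ)+1))
      (Real.log (1+x) - Real.log (1-x)) := by
  have hA := Real.hasSum_pow_div_log_of_abs_lt_one h1
  have h1' : |(-x)| < 1 := by rwa [abs_neg]
  have hB := Real.hasSum_pow_div_log_of_abs_lt_one h1'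
  rw [sub_neg_eq_add] at hB
  have hC := hA.sub hB
  have heq : -Real.log (1-x) - -Real.log (1+x) = Real.log (1+x) - Real.log (1-x) := by ring
  rw [heq] at hC
  have hinj : Function.Injective (fun k : ℕ => 2*k) := by
    intro a b hab; dsimp at hab; omega
  have h0 : ∀ n ∉ Set.range (fun k : ℕ => 2*k),
      x^(n+1)/((n:ℝ)+1) - (-x)^(n+1)/((n:ℝ)+1) = 0 := by
    intro n hn
    have hne : ¬ Even n := by
      rintro ⟨j, hj⟩
      exact hn ⟨j, by dsimp; omega⟩
    have hev : Even (n+1) := (Nat.not_even_iff_odd.mp hne).add_one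
    rw [hev.neg_pow, sub_self]
  have hD := (hinj.hasSum_iff h0).mpr hC
  convert hD using 1
  funext k
  simp only [Function.comp]
  rw [(odd_two_mul_add_one k).neg_pow]
  push_cast
  ring

noncomputable def amH (s : ℝ) : ℝ := Real.log (Real.exp s + 1) - Real.log |Real.exp s - 1|

lemma amH_meas : Measurable amH := by
  unfold amH
  exact (Real.measurable_log.comp (Real.measurable_exp.add_const 1)).sub
    (Real.measurable_log.comp ((Real.measurable_exp.sub_const 1).abs))

lemma amH_nonneg (s : ℝ) : 0 ≤ amH s := by
  unfold amH
  rcases eq_or_ne (Real.exp s) 1 with h | h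
  · simp only [h]
    norm_num
    exact Real.log_nonneg (by norm_num)
  · have h1 : |Real.exp s - 1| > 0 := abs_pos.mpr (sub_ne_zero.mpr h)
    have h2 : |Real.exp s - 1| ≤ Real.exp s + 1 := by
      rcases abs_cases (Real.exp s - 1) with ⟨he, _⟩ | ⟨he, _⟩ <;> nlinarith [Real.exp_pos s]
    linarith [Real.log_le_log h1 h2]

lemma amH_even (s : ℝ) : amH (-s) = amH s := by
  rcases eq_or_ne s 0 with rfl | hs
  · rw [neg_zero]
  · unfold amH
    have he : Real.exp s ≠ 1 := fun h => hs (by rwa [Real.exp_eq_one_iff] at h)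
    have h1 : Real.exp (-s) + 1 = Real.exp (-s) * (Real.exp s + 1) := by
      rw [mul_add, ← Real.exp_add, mul_one]
      simp [add_comm]
    have h2 : |Real.exp (-s) - 1| = Real.exp (-s) * |Real.exp s - 1| := by
      rw [← abs_of_pos (Real.exp_pos (-s)), ← abs_mul, mul_sub, ← Real.exp_add, mul_one]
      simp [abs_sub_comm]
    rw [h1, h2, Real.log_mul (Real.exp_ne_zero _) (by positivity),
      Real.log_mul (Real.exp_ne_zero _) (abs_ne_zero.mpr (sub_ne_zero.mpr he))]
    ring

lemma amH_hasSum {s : ℝ} (hs : 0 < s) :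
    HasSum (fun k : ℕ => 2 * Real.exp (-s) ^ (2*k+1) / (2*(k:ℝ)+1)) (amH s) := by
  have hx0 : 0 < Real.exp (-s) := Real.exp_pos _
  have hx1 : Real.exp (-s) < 1 := Real.exp_lt_one_iff.mpr (by linarith)
  have habs : |Real.exp (-s)| < 1 := by rw [abs_of_pos hx0]; exact hx1
  have hls := logSeries habs
  have hes : 1 < Real.exp s := by
    rw [← Real.exp_zero]
    exact Real.exp_lt_exp.mpr hs
  have h1 : Real.exp s + 1 = Real.exp s * (1 + Real.exp (-s)) := by
    rw [mul_add, ← Real.exp_add, mul_one]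
    simp
  have h2 : |Real.exp s - 1| = Real.exp s - 1 := abs_of_pos (by linarith)
  have h3 : Real.exp s - 1 = Real.exp s * (1 - Real.exp (-s)) := by
    rw [mul_sub, ← Real.exp_add, mul_one]
    simp
  have hgoal : Real.log (1 + Real.exp (-s)) - Real.log (1 - Real.exp (-s)) = amH s := by
    unfold amH
    rw [h1, h2, h3, Real.log_mul (Real.exp_ne_zero _) (by positivity),
      Real.log_mul (Real.exp_ne_zero _) (by nlinarith)]
    ring
  rw [← hgoal]
  exact hls
lemma termIntegral {b : ℝ} (hb : 0 < b) {c : ℝ} (hc : 0 ≤ c) :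
    ∫⁻ s in Ioi (0:ℝ), ENNReal.ofReal (c * Real.exp (-(b*s))) = ENNReal.ofReal (c / b) := by
  have hi0 : IntegrableOn (fun x : ℝ => Real.exp (-b*x)) (Ioi 0) := exp_neg_integrableOn_Ioi 0 hb
  have hi : IntegrableOn (fun s : ℝ => c * Real.exp (-(b*s))) (Ioi 0) := by
    simpa [neg_mul, IntegrableOn] using hi0.const_mul c
  have h1 : ∫ s in Ioi (0:ℝ), Real.exp (-(b*s)) = b⁻¹ := by
    have h := integral_comp_mul_left_Ioi (fun x => Real.exp (-x)) 0 hb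
    simp only [mul_zero] at h
    rw [h, integral_exp_neg_Ioi_zero, smul_eq_mul, mul_one]
  have h2 : ∫ s in Ioi (0:ℝ), c * Real.exp (-(b*s)) = c / b := by
    rw [integral_const_mul, h1, div_eq_mul_inv]
  rw [← h2]
  rw [← ofReal_integral_eq_lintegral_ofReal hi]
  exact Filter.Eventually.of_forall fun x => by positivity

lemma intPos : ∫⁻ s in Ioi (0:ℝ), ENNReal.ofReal (amH s) = ENNReal.ofReal (Real.pi^2/4) := by
  have step1 : ∫⁻ s in Ioi (0:ℝ), ENNReal.ofReal (amH s)
      = ∫⁻ s in Ioi (0:ℝ), ∑' k : ℕ,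
          ENNReal.ofReal ((2 / (2*(k:ℝ)+1)) * Real.exp (-((2*(k:ℝ)+1)*s))) := by
    apply setLIntegral_congr_fun measurableSet_Ioi
    intro s hs
    beta_reduce
    have hsum := amH_hasSum hs
    have hform : ∀ k : ℕ, 2 * Real.exp (-s) ^ (2*k+1) / (2*(k:ℝ)+1)
        = (2 / (2*(k:ℝ)+1)) * Real.exp (-((2*(k:ℝ)+1)*s)) := by
      intro k
      rw [← Real.exp_nat_mul]
      push_cast
      ring_nf
    have hnn : ∀ k : ℕ, 0 ≤ 2 * Real.exp (-s) ^ (2*k+1) / (2*(k:ℝ)+1) := by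
      intro k; positivity
    rw [← hsum.tsum_eq, ENNReal.ofReal_tsum_of_nonneg hnn hsum.summable]
    exact tsum_congr fun k => by rw [hform k]
  rw [step1, lintegral_tsum (fun k => by fun_prop)]
  have hterm : ∀ k : ℕ, ∫⁻ s in Ioi (0:ℝ),
      ENNReal.ofReal ((2 / (2*(k:ℝ)+1)) * Real.exp (-((2*(k:ℝ)+1)*s)))
      = ENNReal.ofReal (2 / (2*(k:ℝ)+1)^2) := by
    intro k
    have hk : (0:ℝ) < 2*(k:ℝ)+1 := by positivity
    rw [termIntegral hk (by positivity)]
    congr 1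
    field_simp
  simp_rw [hterm]
  have hnn2 : ∀ k : ℕ, (0:ℝ) ≤ 2 / (2*(k:ℝ)+1)^2 := fun k => by positivity
  have hsum2 : HasSum (fun k : ℕ => 2 / (2*(k:ℝ)+1)^2) (Real.pi^2/4) := by
    have := oddBasel.mul_left 2
    have he : (fun k : ℕ => 2 * ((1:ℝ) / (2*(k:ℝ)+1)^2)) = fun k : ℕ => 2 / (2*(k:ℝ)+1)^2 := by
      funext k; ring
    rw [he] at this
    convert this using 1
    · rfl
    · ring
  rw [← ENNReal.ofReal_tsum_of_nonneg hnn2 hsum2.summable, hsum2.tsum_eq]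
lemma ofReal_amH_meas : Measurable (fun s : ℝ => ENNReal.ofReal (amH s)) :=
  ENNReal.measurable_ofReal.comp amH_meas

lemma intNeg : ∫⁻ s in Iio (0:ℝ), ENNReal.ofReal (amH s)
    = ∫⁻ s in Ioi (0:ℝ), ENNReal.ofReal (amH s) := by
  have hmap : (volume : Measure ℝ).restrict (Iio 0)
      = Measure.map Neg.neg (volume.restrict (Ioi 0)) := by
    conv_lhs => rw [← Measure.map_neg_eq_self (volume : Measure ℝ)]
    rw [Measure.restrict_map measurable_neg measurableSet_Iio]
    congr 1
    ext x
    simp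
  rw [hmap, lintegral_map ofReal_amH_meas measurable_neg]
  exact lintegral_congr fun s => by rw [amH_even]

lemma intFull : ∫⁻ s, ENNReal.ofReal (amH s) = ENNReal.ofReal (Real.pi^2/2) := by
  rw [← lintegral_add_compl (fun s => ENNReal.ofReal (amH s)) (measurableSet_Ioi (a := (0:ℝ)))]
  have hc : (Ioi (0:ℝ))ᶜ = Iic 0 := by ext x; simp
  rw [hc, ← Measure.restrict_congr_set Iio_ae_eq_Iic, intNeg, intPos,
    ← ENNReal.ofReal_add (by positivity) (by positivity)]
  congr 1
  ring

lemma intScaled (m : ℤ) (hm : m ≠ 0) :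
    ∫⁻ u : ℝ, ENNReal.ofReal (amH ((m:ℝ)*u))
      = ENNReal.ofReal (Real.pi^2 / (2 * |(m:ℝ)|)) := by
  have hm' : (m:ℝ) ≠ 0 := Int.cast_ne_zero.mpr hm
  have hmap := Real.map_volume_mul_left hm'
  have h1 : ∫⁻ u : ℝ, ENNReal.ofReal (amH ((m:ℝ)*u))
      = ∫⁻ x, ENNReal.ofReal (amH x) ∂(Measure.map (fun u : ℝ => (m:ℝ)*u) volume) := by
    rw [lintegral_map ofReal_amH_meas (measurable_const_mul _)]
  rw [h1, hmap, lintegral_smul_measure, intFull, smul_eq_mul, ← ENNReal.ofReal_mul (by positivity)]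
  congr 1
  rw [abs_inv]
  field_simp
lemma expMLog {r : ℝ} (hr : 0 < r) (m : ℤ) :
    Real.exp ((m:ℝ) * Real.log r) = r ^ m := by
  rw [← Real.rpow_intCast r m, Real.rpow_def_of_pos hr, mul_comm]

lemma amoeba_subset {m : ℤ} (hm : m ≠ 0) {p : ℝ × ℝ}
    (hp : ∃ z : ℂ, z ≠ 0 ∧ z ^ m ≠ 1 ∧
      p = (Real.log (‖z‖), Real.log (‖z ^ m - 1‖)))
    (hp1 : p.1 ≠ 0) :
    Real.log |Real.exp ((m:ℝ)*p.1) - 1| ≤ p.2 ∧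
      p.2 ≤ Real.log (Real.exp ((m:ℝ)*p.1) + 1) := by
  obtain ⟨z, hz0, hzm, hpe⟩ := hp
  have hr : 0 < ‖z‖ := norm_pos_iff.mpr hz0
  have hp1' : p.1 = Real.log (‖z‖) := by rw [hpe]
  have hp2' : p.2 = Real.log (‖z ^ m - 1‖) := by rw [hpe]
  have hexp : Real.exp ((m:ℝ)*p.1) = ‖z ^ m‖ := by
    rw [hp1', expMLog hr m, norm_zpow]
  have hlogne : Real.log (‖z‖) ≠ 0 := by rw [← hp1']; exact hp1
  have hρ1 : ‖z ^ m‖ ≠ 1 := by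
    rw [← hexp]
    simp only [ne_eq, Real.exp_eq_one_iff]
    exact mul_ne_zero (Int.cast_ne_zero.mpr hm) hp1
  have habs_pos : 0 < ‖z ^ m - 1‖ :=
    norm_pos_iff.mpr (sub_ne_zero.mpr hzm)
  have hlb : |‖z ^ m‖ - 1| ≤ ‖z ^ m - 1‖ := by
    have := abs_norm_sub_norm_le (z ^ m) 1
    rwa [norm_one] at this
  have hub : ‖z ^ m - 1‖ ≤ ‖z ^ m‖ + 1 := by
    calc ‖z ^ m - 1‖ = ‖z ^ m - 1‖ := rfl
    _ ≤ ‖z ^ m‖ + ‖(1:ℂ)‖ := norm_sub_le _ _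
    _ = ‖z ^ m‖ + 1 := by rw [norm_one]
  constructor
  · rw [hexp, hp2']
    exact Real.log_le_log (abs_pos.mpr (sub_ne_zero.mpr hρ1)) hlb
  · rw [hexp, hp2']
    exact Real.log_le_log habs_pos hub

lemma amoeba_supset {m : ℤ} (hm : m ≠ 0) {p : ℝ × ℝ}
    (hp : Real.log |Real.exp ((m:ℝ)*p.1) - 1| ≤ p.2 ∧
      p.2 ≤ Real.log (Real.exp ((m:ℝ)*p.1) + 1))
    (hp1 : p.1 ≠ 0) :
    ∃ z : ℂ, z ≠ 0 ∧ z ^ m ≠ 1 ∧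
      p = (Real.log (‖z‖), Real.log (‖z ^ m - 1‖)) := by
  obtain ⟨h1, h2⟩ := hp
  set u := p.1 with hu
  set t := p.2 with ht
  set ρ := Real.exp ((m:ℝ)*u) with hρ
  have hm' : (m:ℝ) ≠ 0 := Int.cast_ne_zero.mpr hm
  have hρpos : 0 < ρ := Real.exp_pos _
  have hρ1 : ρ ≠ 1 := by
    rw [hρ]
    simp only [ne_eq, Real.exp_eq_one_iff]
    exact mul_ne_zero hm' hp1
  have hsub : |ρ - 1| > 0 := abs_pos.mpr (sub_ne_zero.mpr hρ1)
  have hlo : |ρ - 1| ≤ Real.exp t := by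
    have := Real.exp_le_exp.mpr h1
    rwa [Real.exp_log hsub] at this
  have hhi : Real.exp t ≤ ρ + 1 := by
    have := Real.exp_le_exp.mpr h2
    rwa [Real.exp_log (by positivity)] at this
  -- IVT for θ ↦ ρ² + 1 - 2ρcos θ
  set c : ℝ → ℝ := fun θ => ρ^2 + 1 - 2*ρ*Real.cos θ with hc
  have hcont : ContinuousOn c (Icc 0 Real.pi) := by
    apply Continuous.continuousOn
    simp only [hc]
    fun_prop
  have hc0 : c 0 = (ρ - 1)^2 := by simp only [hc, Real.cos_zero]; ring
  have hcπ : c Real.pi = (ρ + 1)^2 := by simp only [hc, Real.cos_pi]; ring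
  have hmem : (Real.exp t)^2 ∈ Icc (c 0) (c Real.pi) := by
    rw [hc0, hcπ]
    constructor
    · calc (ρ-1)^2 = |ρ-1|^2 := (_root_.sq_abs _).symm
      _ ≤ (Real.exp t)^2 := pow_le_pow_left₀ (abs_nonneg _) hlo 2
    · exact pow_le_pow_left₀ (Real.exp_nonneg t) hhi 2
  obtain ⟨θ, hθmem, hθ⟩ := intermediate_value_Icc Real.pi_pos.le hcont hmem
  -- construct z
  have hmC : (m:ℂ) ≠ 0 := Int.cast_ne_zero.mpr hm
  set z : ℂ := Complex.exp (↑u + ↑(θ/(m:ℝ)) * Complex.I) with hzdef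
  have hz0 : z ≠ 0 := Complex.exp_ne_zero _
  have hzm : z ^ m = Complex.exp (↑((m:ℝ)*u) + ↑θ * Complex.I) := by
    rw [hzdef, ← Complex.exp_int_mul]
    congr 1
    push_cast
    field_simp
  have hre : (z ^ m).re = ρ * Real.cos θ := by
    rw [hzm, Complex.exp_re]
    simp [← hρ]
  have him : (z ^ m).im = ρ * Real.sin θ := by
    rw [hzm, Complex.exp_im]
    simp [← hρ]
  have habs : ‖z ^ m - 1‖ = Real.exp t := by
    have hsq : (‖z ^ m - 1‖)^2 = (Real.exp t)^2 := by
      rw [Complex.sq_norm, Complex.normSq_apply]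
      simp only [Complex.sub_re, Complex.sub_im, Complex.one_re, Complex.one_im, hre, him]
      rw [← hθ]
      simp only [hc]
      linear_combination (ρ^2) * Real.sin_sq_add_cos_sq θ
    calc ‖z ^ m - 1‖
        = Real.sqrt ((‖z ^ m - 1‖)^2) :=
          (Real.sqrt_sq (norm_nonneg _)).symm
      _ = Real.sqrt ((Real.exp t)^2) := by rw [hsq]
      _ = Real.exp t := Real.sqrt_sq (Real.exp_nonneg t)
  have hzm1 : z ^ m ≠ 1 := by
    intro h
    rw [h, sub_self, norm_zero] at habs
    exact (Real.exp_pos t).ne habs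
  refine ⟨z, hz0, hzm1, ?_⟩
  have habsz : ‖z‖ = Real.exp u := by
    rw [hzdef, Complex.norm_exp]
    simp
  rw [habsz, habs, Real.log_exp, Real.log_exp]
lemma loMeas (m : ℤ) : Measurable (fun u : ℝ => Real.log |Real.exp ((m:ℝ)*u) - 1|) :=
  Real.measurable_log.comp
    (((Real.measurable_exp.comp (measurable_const_mul _)).sub_const 1).abs)

lemma hiMeas (m : ℤ) : Measurable (fun u : ℝ => Real.log (Real.exp ((m:ℝ)*u) + 1)) :=
  Real.measurable_log.comp
    ((Real.measurable_exp.comp (measurable_const_mul _)).add_const 1)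

lemma volT (m : ℤ) :
    volume {p : ℝ × ℝ | Real.log |Real.exp ((m:ℝ)*p.1) - 1| ≤ p.2 ∧
        p.2 ≤ Real.log (Real.exp ((m:ℝ)*p.1) + 1)}
      = ∫⁻ u : ℝ, ENNReal.ofReal (amH ((m:ℝ)*u)) := by
  have hT : MeasurableSet {p : ℝ × ℝ | Real.log |Real.exp ((m:ℝ)*p.1) - 1| ≤ p.2 ∧
      p.2 ≤ Real.log (Real.exp ((m:ℝ)*p.1) + 1)} :=
    (measurableSet_le ((loMeas m).comp measurable_fst) measurable_snd).inter
      (measurableSet_le measurable_snd ((hiMeas m).comp measurable_fst))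
  rw [Measure.volume_eq_prod, Measure.prod_apply hT]
  apply lintegral_congr
  intro u
  have hsec : (Prod.mk u ⁻¹' {p : ℝ × ℝ | Real.log |Real.exp ((m:ℝ)*p.1) - 1| ≤ p.2 ∧
      p.2 ≤ Real.log (Real.exp ((m:ℝ)*p.1) + 1)})
      = Icc (Real.log |Real.exp ((m:ℝ)*u) - 1|) (Real.log (Real.exp ((m:ℝ)*u) + 1)) := rfl
  rw [hsec, Real.volume_Icc]
  rfl

/-- the area of the amoeba of `z ↦ (z, z^m − 1)` equals `π²/(2|m|)`. -/
theorem stmt14 (m : ℤ) (hm : m ≠ 0) :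
    volume {p : ℝ × ℝ | ∃ z : ℂ, z ≠ 0 ∧ z ^ m ≠ 1 ∧
        p = (Real.log (‖z‖), Real.log (‖z ^ m - 1‖))}
      = ENNReal.ofReal (Real.pi ^ 2 / (2 * (|m| : ℝ))) := by
  set S := {p : ℝ × ℝ | ∃ z : ℂ, z ≠ 0 ∧ z ^ m ≠ 1 ∧
      p = (Real.log (‖z‖), Real.log (‖z ^ m - 1‖))} with hS
  set T := {p : ℝ × ℝ | Real.log |Real.exp ((m:ℝ)*p.1) - 1| ≤ p.2 ∧
      p.2 ≤ Real.log (Real.exp ((m:ℝ)*p.1) + 1)} with hTdef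
  set L := {p : ℝ × ℝ | p.1 = 0} with hL
  have hLnull : volume L = 0 := by
    have : L = ({0} : Set ℝ) ×ˢ (univ : Set ℝ) := by
      ext x
      simp only [hL, Set.mem_setOf_eq, Set.mem_prod, Set.mem_singleton_iff, Set.mem_univ, and_true]
    rw [this, Measure.volume_eq_prod, Measure.prod_prod]
    simp
  have hdiff : S \ L = T \ L := by
    ext p
    simp only [Set.mem_diff, hL, Set.mem_setOf_eq]
    constructor
    · rintro ⟨hp, hp1⟩
      exact ⟨amoeba_subset hm hp hp1, hp1⟩
    · rintro ⟨hp, hp1⟩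
      exact ⟨amoeba_supset hm hp hp1, hp1⟩
  have h1 : volume S = volume T := by
    rw [← measure_diff_null (s := S) hLnull, hdiff, measure_diff_null hLnull]
  rw [h1, hTdef, volT m, intScaled m hm]
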